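/- Let F be a field of characteristic zero and let A be the free nonassociative F-algebra on one generator a modulo the relations that every monomial containing two or more (not necessarily disjoint) occurrences of the subword a·a equals zero. Then A satisfies the metabelian identity (x₁x₂)(x₃x₄) ≡ 0. -/

import Mathlib

noncomputable section

open Filter Topology

/-- Is a free-magma element a single leaf? -/
def FreeMagma.isLeaf {X : Type*} : FreeMagma X → Bool
  | .of _ => true
  | .mul _ _ => false

/-- The number of occurrences of the subword `a·a` in a monomial in one generator `a`. -/
def countSq : FreeMagma Unit → ℕ
  | .of _ => 0
  | .mul x y => countSq x + countSq y + (if x.isLeaf && y.isLeaf then 1 else 0)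

variable (F : Type) [Field F] [CharZero F]

/-- The free nonassociative (non-unital) algebra on one generator `a`. -/
abbrev FA := FreeNonUnitalNonAssocAlgebra F Unit

/-- The monomial of `FA F` corresponding to a magma word. -/
def mono (m : FreeMagma Unit) : FA F := MonoidAlgebra.single m (1 : F)

/-- The relations ideal of `A`: the span of all monomials containing two or more
subwords equal to `a²`.  The algebra `A` of the paper is `FA F` modulo `relI F`. -/
def relI : Submodule F (FA F) :=
  Submodule.span F {x : FA F | ∃ m : FreeMagma Unit, 2 ≤ countSq m ∧ x = mono F m}

/-- the algebra `A = FA F / relI F` satisfies the metabelian identity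
`(x₁x₂)(x₃x₄) ≡ 0`, i.e. every such product in the free algebra lies in the
relations ideal. -/
lemma countSq_pos : ∀ x : FreeMagma Unit, x.isLeaf = false → 1 ≤ countSq x
  | .mul a b, _ => by
    match a, b with
    | .of _, .of _ => simp [countSq, FreeMagma.isLeaf]
    | .of _, .mul c d =>
        have := countSq_pos (.mul c d) rfl
        simp only [countSq] at this ⊢; omega
    | .mul c d, y =>
        have := countSq_pos (.mul c d) rfl
        simp only [countSq] at this ⊢; omega

lemma countSq_mul_pos (x y : FreeMagma Unit) : 1 ≤ countSq (FreeMagma.mul x y) :=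
  countSq_pos _ rfl

lemma mono_mem (m₁ m₂ m₃ m₄ : FreeMagma Unit) :
    (mono F m₁ * mono F m₂) * (mono F m₃ * mono F m₄) ∈ relI F := by
  have h : (mono F m₁ * mono F m₂) * (mono F m₃ * mono F m₄)
      = mono F ((m₁ * m₂) * (m₃ * m₄)) := by
    simp [mono, MonoidAlgebra.single_mul_single]
  rw [h]
  apply Submodule.subset_span
  refine ⟨(m₁ * m₂) * (m₃ * m₄), ?_, rfl⟩
  have h1 := countSq_mul_pos m₁ m₂
  have h2 := countSq_mul_pos m₃ m₄
  show 2 ≤ countSq (FreeMagma.mul (FreeMagma.mul m₁ m₂) (FreeMagma.mul m₃ m₄))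
  simp only [countSq, FreeMagma.isLeaf] at h1 h2 ⊢
  omega

lemma single_eq_smul_mono (m : FreeMagma Unit) (c : F) :
    (MonoidAlgebra.single m c : FA F) = c • mono F m := by
  simp [mono, MonoidAlgebra.smul_single']

theorem metabelian_identity (p q r s : FA F) :
    (p * q) * (r * s) ∈ relI F := by
  induction p using MonoidAlgebra.induction_linear with
  | zero => simp
  | add f g hf hg => rw [add_mul, add_mul]; exact add_mem hf hg
  | single m₁ c₁ =>
    induction q using MonoidAlgebra.induction_linear with
    | zero => simp
    | add f g hf hg => rw [mul_add, add_mul]; exact add_mem hf hg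
    | single m₂ c₂ =>
      induction r using MonoidAlgebra.induction_linear with
      | zero => simp
      | add f g hf hg => rw [add_mul, mul_add]; exact add_mem hf hg
      | single m₃ c₃ =>
        induction s using MonoidAlgebra.induction_linear with
        | zero => simp
        | add f g hf hg => rw [mul_add, mul_add]; exact add_mem hf hg
        | single m₄ c₄ =>
          rw [single_eq_smul_mono, single_eq_smul_mono, single_eq_smul_mono,
            single_eq_smul_mono]
          simp only [smul_mul_assoc, mul_smul_comm]
          exact Submodule.smul_mem _ _ (Submodule.smul_mem _ _ (Submodule.smul_mem _ _
            (Submodule.smul_mem _ _ (mono_mem F m₁ m₂ m₃ m₄))))
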